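/- Let K be an infinite field, V a finite-dimensional K-vector space, J ∈ End(V) nilpotent in Jordan first canonical form, and M ∈ C(J) nilpotent. Let M† ∈ C(J) be the matrix whose conjugate M̂† consists only of the coarse diagonal blocks of M̂ (all other entries zero). Then for all but finitely many λ ∈ K, rank(M† + λJ) ≤ rank(M + λJ). -/

import Mathlib

open Matrix

section Aux

variable {F : Type*} [Field F]

/-- From a matrix of rank `ρ` one can select `ρ` linearly independent rows. -/
lemma aux_exists_li_rows {m m' : Type*} [Fintype m] [Fintype m'] (A : Matrix m m' F)
    (ρ : ℕ) (h : A.rank = ρ) :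
    ∃ f : Fin ρ → m, LinearIndependent F (fun i => A (f i)) := by
  classical
  obtain ⟨b, hbsub, hbspan, hbli⟩ := exists_linearIndependent F (Set.range A)
  have hbfin : b.Finite := (Set.finite_range A).subset hbsub
  haveI : Fintype b := hbfin.fintype
  have hcard : Fintype.card b = ρ := by
    have hfr := finrank_span_set_eq_card (s := b) hbli
    rw [A.rank_eq_finrank_span_row] at h
    change Module.finrank F (Submodule.span F (Set.range A)) = ρ at h
    rw [← hbspan, hfr, Set.toFinset_card] at h
    exact h
  have e : Fin ρ ≃ b := (Fintype.equivFinOfCardEq hcard).symm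
  choose f hf using fun x : b => Set.mem_range.mp (hbsub x.2)
  refine ⟨fun i => f (e i), ?_⟩
  have hfe : (fun i : Fin ρ => A (f (e i))) = (fun x : b => (x : m' → F)) ∘ e := by
    funext i
    simp [hf]
  rw [hfe]
  exact hbli.comp e e.injective

/-- A matrix of rank `ρ` has an invertible `ρ × ρ` submatrix. -/
lemma aux_exists_minor {m m' : Type*} [Fintype m] [Fintype m'] [DecidableEq m] [DecidableEq m']
    (A : Matrix m m' F) (ρ : ℕ) (h : A.rank = ρ) :
    ∃ (f : Fin ρ → m) (g : Fin ρ → m'), (A.submatrix f g).det ≠ 0 := by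
  obtain ⟨f, hf⟩ := aux_exists_li_rows A ρ h
  have hB : (A.submatrix f id).rank = ρ := by
    have hli : LinearIndependent F (fun i => (A.submatrix f id) i) := hf
    have hr := hli.rank_matrix
    rw [Fintype.card_fin] at hr
    exact hr
  have hBT : ((A.submatrix f id)ᵀ).rank = ρ := by rw [rank_transpose]; exact hB
  obtain ⟨g, hg⟩ := aux_exists_li_rows ((A.submatrix f id)ᵀ) ρ hBT
  refine ⟨f, g, ?_⟩
  have hli : LinearIndependent F (fun i => ((A.submatrix f id)ᵀ.submatrix g id) i) := hg
  have hU : IsUnit ((A.submatrix f id)ᵀ.submatrix g id) :=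
    linearIndependent_rows_iff_isUnit.mp hli
  have hEq : ((A.submatrix f id)ᵀ.submatrix g id) = (A.submatrix f g)ᵀ := by
    ext i j; rfl
  rw [hEq] at hU
  have hdet : IsUnit ((A.submatrix f g)ᵀ.det) := (isUnit_iff_isUnit_det _).mp hU
  rw [det_transpose] at hdet
  exact hdet.ne_zero

/-- The rank of any (not necessarily square) submatrix is at most the rank. -/
lemma aux_rank_submatrix_le {m m' : Type*} [Fintype m] [Fintype m'] [DecidableEq m]
    [DecidableEq m'] (A : Matrix m m' F) {ρ : ℕ} (f : Fin ρ → m) (g : Fin ρ → m') :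
    (A.submatrix f g).rank ≤ A.rank := by
  have e1 : ((1 : Matrix m m F).submatrix f (⇑(Equiv.refl m))) *
      (A.submatrix (⇑(Equiv.refl m)) g) = A.submatrix f g := by
    rw [submatrix_mul_equiv, Matrix.one_mul]
  have e2 : (A.submatrix (id : m → m) (⇑(Equiv.refl m'))) *
      ((1 : Matrix m' m' F).submatrix (⇑(Equiv.refl m')) g) =
        A.submatrix (id : m → m) g := by
    rw [submatrix_mul_equiv, Matrix.mul_one]
  have e3 : A.submatrix (⇑(Equiv.refl m)) g = A.submatrix (id : m → m) g := by
    rw [Equiv.coe_refl]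
  have e4 : A.submatrix (id : m → m) (⇑(Equiv.refl m')) = A := by
    rw [Equiv.coe_refl, submatrix_id_id]
  have h1 : (A.submatrix f g).rank ≤ (A.submatrix (id : m → m) g).rank := by
    rw [← e1, e3]
    exact rank_mul_le_right _ _
  have h2 : (A.submatrix (id : m → m) g).rank ≤ A.rank := by
    rw [← e2, e4]
    exact rank_mul_le_left _ _
  exact h1.trans h2

end Aux

/-- `K` an infinite field, `J` the nilpotent Jordan matrix with block sizes
`n 0 ≥ n 1 ≥ ⋯` (basis indexed by the boxes `⟨i, a⟩` of the Young diagram, horizontal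
numbering), and `M ∈ C(J)` nilpotent.  Let `M†` be the matrix whose conjugate `M̂†`
consists only of the coarse diagonal blocks of `M̂`, i.e. `M†` keeps exactly the entries
of `M` connecting boxes in the same column and is zero elsewhere.  Then `M† ∈ C(J)` and,
for all but finitely many `λ ∈ K`, `rank(M† + λJ) ≤ rank(M + λJ)`. -/
theorem rank_coarse_diagonal_part_le (K : Type*) [Field K] [Infinite K] (r : ℕ)
    (n : Fin r → ℕ) (hmono : Antitone n) (hpos : ∀ i, 0 < n i)
    (J M : Matrix (Σ i : Fin r, Fin (n i)) (Σ i : Fin r, Fin (n i)) K)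
    (hJ : ∀ x y : Σ i : Fin r, Fin (n i),
      J x y = if x.1 = y.1 ∧ (y.2 : ℕ) = (x.2 : ℕ) + 1 then 1 else 0)
    (hM : M * J = J * M) (hMnil : IsNilpotent M)
    (Mdag : Matrix (Σ i : Fin r, Fin (n i)) (Σ i : Fin r, Fin (n i)) K)
    (hMdag : ∀ x y : Σ i : Fin r, Fin (n i),
      Mdag x y = if (x.2 : ℕ) = (y.2 : ℕ) then M x y else 0) :
    Mdag * J = J * Mdag ∧
      {lam : K | ¬ (Mdag + lam • J).rank ≤ (M + lam • J).rank}.Finite := by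
  classical
  -- multiplication with J on the right: shifts columns
  have hmulJ0 : ∀ (A : Matrix (Σ i : Fin r, Fin (n i)) (Σ i : Fin r, Fin (n i)) K) (x : (Σ i : Fin r, Fin (n i))) (j : Fin r) (h0 : 0 < n j),
      (A * J) x ⟨j, ⟨0, h0⟩⟩ = 0 := by
    intro A x j h0
    rw [Matrix.mul_apply]
    apply Finset.sum_eq_zero
    intro z _
    rw [hJ, if_neg, mul_zero]
    rintro ⟨-, h2⟩
    simp at h2
  have hmulJsucc : ∀ (A : Matrix (Σ i : Fin r, Fin (n i)) (Σ i : Fin r, Fin (n i)) K) (x : (Σ i : Fin r, Fin (n i))) (j : Fin r) (b : ℕ) (hb : b + 1 < n j),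
      (A * J) x ⟨j, ⟨b + 1, hb⟩⟩ = A x ⟨j, ⟨b, by omega⟩⟩ := by
    intro A x j b hb
    rw [Matrix.mul_apply, Finset.sum_eq_single (⟨j, ⟨b, by omega⟩⟩ : (Σ i : Fin r, Fin (n i)))]
    · rw [hJ, if_pos ⟨rfl, rfl⟩, mul_one]
    · intro z _ hz
      rw [hJ, if_neg, mul_zero]
      rintro ⟨h1, h2⟩
      apply hz
      obtain ⟨zf, zs⟩ := z
      dsimp at h1 h2
      subst h1
      have : (zs : ℕ) = b := by omega
      exact congrArg (Sigma.mk zf) (Fin.ext this)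
    · intro h
      exact absurd (Finset.mem_univ _) h
  -- multiplication with J on the left: shifts rows
  have hJmul : ∀ (A : Matrix (Σ i : Fin r, Fin (n i)) (Σ i : Fin r, Fin (n i)) K) (i : Fin r) (a : ℕ) (ha : a < n i) (y : (Σ i : Fin r, Fin (n i))),
      (J * A) ⟨i, ⟨a, ha⟩⟩ y = if h : a + 1 < n i then A ⟨i, ⟨a + 1, h⟩⟩ y else 0 := by
    intro A i a ha y
    rw [Matrix.mul_apply]
    by_cases h : a + 1 < n i
    · rw [dif_pos h, Finset.sum_eq_single (⟨i, ⟨a + 1, h⟩⟩ : (Σ i : Fin r, Fin (n i)))]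
      · rw [hJ, if_pos ⟨rfl, rfl⟩, one_mul]
      · intro z _ hz
        rw [hJ, if_neg, zero_mul]
        rintro ⟨h1, h2⟩
        apply hz
        obtain ⟨zf, zs⟩ := z
        dsimp at h1 h2
        subst h1
        exact congrArg (Sigma.mk i) (Fin.ext h2)
      · intro hmem
        exact absurd (Finset.mem_univ _) hmem
    · rw [dif_neg h]
      apply Finset.sum_eq_zero
      intro z _
      rw [hJ, if_neg, zero_mul]
      rintro ⟨h1, h2⟩
      obtain ⟨zf, zs⟩ := z
      dsimp at h1 h2
      subst h1
      have := zs.isLt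
      omega
  have hMJ : ∀ x y : (Σ i : Fin r, Fin (n i)), (M * J) x y = (J * M) x y := by
    intro x y
    rw [hM]
  -- entries of M strictly below the (fine) diagonal vanish
  have hlow : ∀ (b : ℕ) (j : Fin r) (hb : b < n j) (i : Fin r) (a : ℕ) (ha : a < n i),
      b < a → M ⟨i, ⟨a, ha⟩⟩ ⟨j, ⟨b, hb⟩⟩ = 0 := by
    intro b
    induction b with
    | zero =>
      intro j hb i a ha hba
      obtain ⟨a', rfl⟩ : ∃ a', a = a' + 1 := ⟨a - 1, by omega⟩
      have hkey := hMJ ⟨i, ⟨a', by omega⟩⟩ ⟨j, ⟨0, hb⟩⟩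
      rw [hmulJ0, hJmul, dif_pos (show a' + 1 < n i from ha)] at hkey
      exact hkey.symm
    | succ b ih =>
      intro j hb i a ha hba
      obtain ⟨a', rfl⟩ : ∃ a', a = a' + 1 := ⟨a - 1, by omega⟩
      have hkey := hMJ ⟨i, ⟨a', by omega⟩⟩ ⟨j, ⟨b + 1, hb⟩⟩
      rw [hmulJsucc, hJmul, dif_pos (show a' + 1 < n i from ha)] at hkey
      exact hkey.symm.trans (ih j (by omega) i a' (by omega) (by omega))
  have hM0 : ∀ x y : (Σ i : Fin r, Fin (n i)), (y.2 : ℕ) < (x.2 : ℕ) → M x y = 0 := by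
    intro x y hxy
    exact hlow (y.2 : ℕ) y.1 y.2.isLt x.1 (x.2 : ℕ) x.2.isLt hxy
  -- the commutation `M† J = J M†`
  have hcomm : Mdag * J = J * Mdag := by
    ext x y
    obtain ⟨i, a, ha⟩ := x
    obtain ⟨j, b, hb⟩ := y
    rw [hJmul Mdag i a ha]
    cases b with
    | zero =>
      rw [hmulJ0 Mdag]
      split
      · rw [hMdag, if_neg (Nat.succ_ne_zero a)]
      · rfl
    | succ b =>
      rw [hmulJsucc Mdag]
      rw [hMdag]
      by_cases hab : a = b
      · subst hab
        rw [if_pos rfl]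
        have hkey := hMJ ⟨i, ⟨a, ha⟩⟩ ⟨j, ⟨a + 1, hb⟩⟩
        rw [hmulJsucc, hJmul] at hkey
        rw [hkey]
        split
        · rw [hMdag, if_pos rfl]
        · rfl
      · rw [if_neg hab]
        split
        · rw [hMdag, if_neg (fun hcon => hab (Nat.succ_injective hcon))]
        · rfl
  refine ⟨hcomm, ?_⟩
  -- the scaling diagonal matrices
  have hdiagdet : ∀ t : K, t ≠ 0 →
      IsUnit (Matrix.diagonal (fun x : (Σ i : Fin r, Fin (n i)) => t ^ (x.2 : ℕ))).det := by
    intro t ht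
    rw [Matrix.det_diagonal]
    exact isUnit_iff_ne_zero.mpr
      (Finset.prod_ne_zero_iff.mpr (fun x _ => pow_ne_zero _ ht))
  have hrank_conj : ∀ (A B : Matrix (Σ i : Fin r, Fin (n i)) (Σ i : Fin r, Fin (n i)) K) (t : K), t ≠ 0 →
      (A * Matrix.diagonal (fun x : (Σ i : Fin r, Fin (n i)) => t ^ (x.2 : ℕ)) =
        Matrix.diagonal (fun x : (Σ i : Fin r, Fin (n i)) => t ^ (x.2 : ℕ)) * B) → A.rank = B.rank := by
    intro A B t ht h
    have h1 := rank_mul_eq_left_of_isUnit_det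
      (Matrix.diagonal (fun x : (Σ i : Fin r, Fin (n i)) => t ^ (x.2 : ℕ))) A (hdiagdet t ht)
    have h2 := rank_mul_eq_right_of_isUnit_det
      (Matrix.diagonal (fun x : (Σ i : Fin r, Fin (n i)) => t ^ (x.2 : ℕ))) B (hdiagdet t ht)
    rw [← h1, h, h2]
  -- conjugation identity for `M† + λ J`
  have hid1 : ∀ lam : K, lam ≠ 0 →
      (Mdag + lam • J) * Matrix.diagonal (fun x : (Σ i : Fin r, Fin (n i)) => lam⁻¹ ^ (x.2 : ℕ)) =
        Matrix.diagonal (fun x : (Σ i : Fin r, Fin (n i)) => lam⁻¹ ^ (x.2 : ℕ)) * (Mdag + J) := by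
    intro lam hlam
    ext x y
    simp only [Matrix.mul_diagonal, Matrix.diagonal_mul, Matrix.add_apply, Matrix.smul_apply,
      smul_eq_mul]
    rw [hMdag, hJ]
    by_cases h1 : (x.2 : ℕ) = (y.2 : ℕ)
    · rw [if_pos h1, if_neg (by rintro ⟨-, h2⟩; omega)]
      rw [show ((y.2 : ℕ)) = (x.2 : ℕ) from h1.symm]
      ring
    · rw [if_neg h1]
      by_cases h2 : x.1 = y.1 ∧ (y.2 : ℕ) = (x.2 : ℕ) + 1
      · rw [if_pos h2, h2.2, pow_succ]
        field_simp
        ring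
      · rw [if_neg h2]
        ring
  -- the polynomial matrix family
  set Bm : Matrix (Σ i : Fin r, Fin (n i)) (Σ i : Fin r, Fin (n i)) (Polynomial K) := Matrix.of fun x y =>
    Polynomial.C (M x y) * Polynomial.X ^ ((y.2 : ℕ) - (x.2 : ℕ)) + Polynomial.C (J x y)
    with hBm
  have hBapply : ∀ (s : K) (x y : (Σ i : Fin r, Fin (n i))),
      (Bm.map (Polynomial.eval s)) x y = M x y * s ^ ((y.2 : ℕ) - (x.2 : ℕ)) + J x y := by
    intro s x y
    simp [hBm, Matrix.map_apply]
  -- conjugation identity for `M + λ J`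
  have hid2 : ∀ lam : K, lam ≠ 0 →
      (M + lam • J) * Matrix.diagonal (fun x : (Σ i : Fin r, Fin (n i)) => lam⁻¹ ^ (x.2 : ℕ)) =
        Matrix.diagonal (fun x : (Σ i : Fin r, Fin (n i)) => lam⁻¹ ^ (x.2 : ℕ)) *
          (Bm.map (Polynomial.eval lam⁻¹)) := by
    intro lam hlam
    ext x y
    simp only [Matrix.mul_diagonal, Matrix.diagonal_mul, Matrix.add_apply, Matrix.smul_apply,
      smul_eq_mul, hBapply]
    rw [hJ]
    by_cases h2 : x.1 = y.1 ∧ (y.2 : ℕ) = (x.2 : ℕ) + 1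
    · rw [if_pos h2, h2.2, Nat.add_sub_cancel_left, pow_succ, pow_one]
      field_simp
    · rw [if_neg h2]
      by_cases hab : (x.2 : ℕ) ≤ (y.2 : ℕ)
      · obtain ⟨c, hc⟩ : ∃ c, (y.2 : ℕ) = (x.2 : ℕ) + c := ⟨(y.2 : ℕ) - (x.2 : ℕ), by omega⟩
        rw [hc, Nat.add_sub_cancel_left, pow_add]
        ring
      · rw [hM0 x y (by omega)]
        ring
  -- evaluation at 0 gives `M† + J`
  have hB0 : Bm.map (Polynomial.eval (0 : K)) = Mdag + J := by
    ext x y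
    rw [hBapply 0 x y, Matrix.add_apply, hMdag]
    by_cases h1 : (x.2 : ℕ) = (y.2 : ℕ)
    · rw [if_pos h1, show ((y.2 : ℕ) - (x.2 : ℕ)) = 0 by omega, pow_zero, mul_one]
    · rw [if_neg h1]
      by_cases hab : (x.2 : ℕ) ≤ (y.2 : ℕ)
      · rw [zero_pow (show ((y.2 : ℕ) - (x.2 : ℕ)) ≠ 0 by omega), mul_zero]
      · rw [hM0 x y (by omega), zero_mul]
  -- the generic rank argument
  set ρ := (Mdag + J).rank with hρ
  obtain ⟨f, g, hdet⟩ := aux_exists_minor (Mdag + J) ρ rfl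
  set p : Polynomial K := (Bm.submatrix f g).det with hp
  have hpeval : ∀ s : K, p.eval s = ((Bm.map (Polynomial.eval s)).submatrix f g).det := by
    intro s
    have h1 := RingHom.map_det (Polynomial.evalRingHom s) (Bm.submatrix f g)
    have h2 : (Polynomial.evalRingHom s).mapMatrix (Bm.submatrix f g) =
        (Bm.map (Polynomial.eval s)).submatrix f g := rfl
    rw [hp]
    exact h1.trans (by rw [h2])
  have hp0 : p ≠ 0 := by
    intro h
    have h1 : p.eval 0 ≠ 0 := by
      rw [hpeval 0, hB0]
      exact hdet
    rw [h] at h1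
    simp at h1
  have hgood : ∀ lam : K, lam ≠ 0 → p.eval lam⁻¹ ≠ 0 →
      (Mdag + lam • J).rank ≤ (M + lam • J).rank := by
    intro lam hlam hroot
    have e1 : (Mdag + lam • J).rank = ρ :=
      hrank_conj (Mdag + lam • J) (Mdag + J) lam⁻¹ (inv_ne_zero hlam) (hid1 lam hlam)
    have e2 : (M + lam • J).rank = (Bm.map (Polynomial.eval lam⁻¹)).rank :=
      hrank_conj _ _ lam⁻¹ (inv_ne_zero hlam) (hid2 lam hlam)
    have e3 : ((Bm.map (Polynomial.eval lam⁻¹)).submatrix f g).rank = ρ := by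
      rw [Matrix.rank_of_isUnit _ ((isUnit_iff_isUnit_det _).mpr
        (isUnit_iff_ne_zero.mpr (by rw [← hpeval]; exact hroot)))]
      exact Fintype.card_fin ρ
    calc (Mdag + lam • J).rank = ρ := e1
      _ = ((Bm.map (Polynomial.eval lam⁻¹)).submatrix f g).rank := e3.symm
      _ ≤ (Bm.map (Polynomial.eval lam⁻¹)).rank := aux_rank_submatrix_le _ f g
      _ = (M + lam • J).rank := e2.symm
  have hsub : {lam : K | ¬ (Mdag + lam • J).rank ≤ (M + lam • J).rank} ⊆
      {0} ∪ (Inv.inv '' {x : K | p.IsRoot x}) := by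
    intro lam hlam
    by_cases h0 : lam = 0
    · exact Or.inl h0
    · right
      by_cases hr : p.eval lam⁻¹ = 0
      · exact ⟨lam⁻¹, hr, inv_inv lam⟩
      · exact absurd (hgood lam h0 hr) hlam
  exact Set.Finite.subset ((Set.finite_singleton 0).union
    ((Polynomial.finite_setOf_isRoot hp0).image Inv.inv)) hsub
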